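/- The subgroup Γ of SL(2,ℤ) generated by the matrices T³ = [[1,3],[0,1]] and T' = [[1,0],[-1,1]] is equal to the full congruence subgroup Γ♭(3) = { [[a,b],[c,d]] ∈ SL(2,ℤ) : b ≡ 0 (mod 3), a ≡ 1 (mod 3), d ≡ 1 (mod 3) }. -/

import Mathlib

open Matrix

/-- The matrix `T³ = [[1,3],[0,1]]` in `SL(2,ℤ)`. -/
def Tcubed : SpecialLinearGroup (Fin 2) ℤ :=
  ⟨!![1, 3; 0, 1], by norm_num [Matrix.det_fin_two_of]⟩

/-- The matrix `T' = S T S⁻¹ = [[1,0],[-1,1]]` in `SL(2,ℤ)`. -/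
def Tprime : SpecialLinearGroup (Fin 2) ℤ :=
  ⟨!![1, 0; -1, 1], by norm_num [Matrix.det_fin_two_of]⟩

/-- The subgroup `Γ♭(3)` of `SL(2,ℤ)`, consisting of the matrices `[[a,b],[c,d]]` with
`b ≡ 0 (mod 3)` and `a ≡ d ≡ 1 (mod 3)`. -/
def GammaFlat : Subgroup (SpecialLinearGroup (Fin 2) ℤ) where
  carrier := {A | A.1 0 1 ≡ 0 [ZMOD 3] ∧ A.1 0 0 ≡ 1 [ZMOD 3] ∧ A.1 1 1 ≡ 1 [ZMOD 3]}
  one_mem' := by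
    refine ⟨?_, ?_, ?_⟩ <;> simp [SpecialLinearGroup.coe_one, Matrix.one_apply]
  mul_mem' := by
    rintro A B ⟨hb, ha, hd⟩ ⟨hb', ha', hd'⟩
    have e : ∀ i j : Fin 2, ((A * B).1) i j = A.1 i 0 * B.1 0 j + A.1 i 1 * B.1 1 j := by
      intro i j
      change ((A : Matrix (Fin 2) (Fin 2) ℤ) * (B : Matrix (Fin 2) (Fin 2) ℤ)) i j = _
      rw [Matrix.mul_apply, Fin.sum_univ_two]
    refine ⟨?_, ?_, ?_⟩
    · show ((A * B).1) 0 1 ≡ 0 [ZMOD 3]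
      rw [e]
      simpa using (ha.mul hb').add (hb.mul hd')
    · show ((A * B).1) 0 0 ≡ 1 [ZMOD 3]
      rw [e]
      simpa using (ha.mul ha').add (hb.mul (Int.ModEq.refl (B.1 1 0)))
    · show ((A * B).1) 1 1 ≡ 1 [ZMOD 3]
      rw [e]
      simpa using ((Int.ModEq.refl (A.1 1 0)).mul hb').add (hd.mul hd')
  inv_mem' := by
    rintro A ⟨hb, ha, hd⟩
    show _ ∧ _ ∧ _
    rw [SpecialLinearGroup.SL2_inv_expl]
    refine ⟨?_, ?_, ?_⟩
    · simpa using hb.neg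
    · exact hd
    · exact ha

lemma Tcubed_inv :
    ((Tcubed⁻¹ : SpecialLinearGroup (Fin 2) ℤ) : Matrix (Fin 2) (Fin 2) ℤ) = !![1, -3; 0, 1] := by
  rw [SpecialLinearGroup.SL2_inv_expl]
  ext i j
  fin_cases i <;> fin_cases j <;> simp [Tcubed]

lemma Tprime_inv :
    ((Tprime⁻¹ : SpecialLinearGroup (Fin 2) ℤ) : Matrix (Fin 2) (Fin 2) ℤ) = !![1, 0; 1, 1] := by
  rw [SpecialLinearGroup.SL2_inv_expl]
  ext i j
  fin_cases i <;> fin_cases j <;> simp [Tprime]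

lemma SL_coe_mul (A B : SpecialLinearGroup (Fin 2) ℤ) :
    ((A * B : SpecialLinearGroup (Fin 2) ℤ) : Matrix (Fin 2) (Fin 2) ℤ) =
      (A : Matrix (Fin 2) (Fin 2) ℤ) * (B : Matrix (Fin 2) (Fin 2) ℤ) := rfl

lemma Tcubed_zpow (n : ℤ) :
    ((Tcubed ^ n : SpecialLinearGroup (Fin 2) ℤ) : Matrix (Fin 2) (Fin 2) ℤ) = !![1, 3*n; 0, 1] := by
  induction n using Int.induction_on with
  | zero => simp [Matrix.one_fin_two]
  | succ k ih =>
      rw [_root_.zpow_add, zpow_one, SL_coe_mul, ih,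
        show (Tcubed : Matrix (Fin 2) (Fin 2) ℤ) = !![1,3;0,1] from rfl, Matrix.mul_fin_two]
      norm_num; ring_nf
  | pred k ih =>
      rw [sub_eq_add_neg, _root_.zpow_add, SL_coe_mul, ih, _root_.zpow_neg_one,
        Tcubed_inv, Matrix.mul_fin_two]
      norm_num; ring_nf

lemma Tprime_zpow (m : ℤ) :
    ((Tprime ^ m : SpecialLinearGroup (Fin 2) ℤ) : Matrix (Fin 2) (Fin 2) ℤ) = !![1, 0; -m, 1] := by
  induction m using Int.induction_on with
  | zero => simp [Matrix.one_fin_two]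
  | succ k ih =>
      rw [_root_.zpow_add, zpow_one, SL_coe_mul, ih,
        show (Tprime : Matrix (Fin 2) (Fin 2) ℤ) = !![1,0;-1,1] from rfl, Matrix.mul_fin_two]
      norm_num; ring_nf
  | pred k ih =>
      rw [sub_eq_add_neg, _root_.zpow_add, SL_coe_mul, ih, _root_.zpow_neg_one,
        Tprime_inv, Matrix.mul_fin_two]
      norm_num; ring_nf

lemma Tcubed_mem_GammaFlat : Tcubed ∈ GammaFlat := by
  refine ⟨?_, ?_, ?_⟩ <;> decide

lemma Tprime_mem_GammaFlat : Tprime ∈ GammaFlat := by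
  refine ⟨?_, ?_, ?_⟩ <;> decide

/-- Division with remainder of absolute value at most `|d|/2`. -/
lemma near_div_pos (a d : ℤ) (hd : 0 < d) : ∃ q : ℤ, 2 * |a - q * d| ≤ d := by
  have h1 : 0 ≤ a % d := Int.emod_nonneg a hd.ne'
  have h2 : a % d < d := Int.emod_lt_of_pos a hd
  have h3 : a - (a / d) * d = a % d := by rw [Int.emod_def]; ring
  by_cases hc : 2 * (a % d) ≤ d
  · exact ⟨a / d, by rw [h3, abs_of_nonneg h1]; exact hc⟩
  · refine ⟨a / d + 1, ?_⟩
    have h4 : a - (a / d + 1) * d = a % d - d := by rw [← h3]; ring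
    rw [h4, abs_of_nonpos (by omega)]
    omega

lemma near_div (a d : ℤ) (hd : d ≠ 0) : ∃ q : ℤ, 2 * |a - q * d| ≤ |d| := by
  rcases lt_or_gt_of_ne hd with h | h
  · obtain ⟨q, hq⟩ := near_div_pos a (-d) (by omega)
    refine ⟨-q, ?_⟩
    rw [abs_of_neg h]
    have : a - -q * d = a - q * -d := by ring
    rw [this]
    exact hq
  · obtain ⟨q, hq⟩ := near_div_pos a d h
    exact ⟨q, by rw [abs_of_pos h]; exact hq⟩

lemma GammaFlat_le_closure_aux (k : ℕ) :
    ∀ A : SpecialLinearGroup (Fin 2) ℤ, A ∈ GammaFlat →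
      ((A : Matrix (Fin 2) (Fin 2) ℤ) 1 0).natAbs = k →
      A ∈ Subgroup.closure {Tcubed, Tprime} := by
  induction k using Nat.strong_induction_on with
  | _ k ih =>
    intro A hA hk
    obtain ⟨hb, ha, hd⟩ := hA
    set a := (A : Matrix (Fin 2) (Fin 2) ℤ) 0 0 with ha_def
    set b := (A : Matrix (Fin 2) (Fin 2) ℤ) 0 1 with hb_def
    set c := (A : Matrix (Fin 2) (Fin 2) ℤ) 1 0 with hc_def
    set d := (A : Matrix (Fin 2) (Fin 2) ℤ) 1 1 with hd_def
    have hAeta : (A : Matrix (Fin 2) (Fin 2) ℤ) = !![a, b; c, d] := Matrix.eta_fin_two _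
    have hdet : a * d - b * c = 1 := by
      have := A.2
      rwa [Matrix.det_fin_two] at this
    have hb3 : (3 : ℤ) ∣ b := Int.modEq_zero_iff_dvd.mp hb
    have ha3 : (3 : ℤ) ∣ 1 - a := ha.dvd
    have hd3 : (3 : ℤ) ∣ 1 - d := hd.dvd
    by_cases hc0 : c = 0
    · -- base case: upper triangular
      have ha1 : a = 1 := by
        have : a = 1 ∨ a = -1 :=
          Int.isUnit_iff.mp (IsUnit.of_mul_eq_one (a := a) d (by rw [← hdet, hc0]; ring))
        omega
      have hd1 : d = 1 := by rw [ha1, hc0] at hdet; omega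
      obtain ⟨e, he⟩ := hb3
      have hAe : A = Tcubed ^ e := by
        apply Subtype.ext
        rw [Tcubed_zpow, hAeta, ha1, hd1, hc0, he]
      rw [hAe]
      exact zpow_mem (Subgroup.subset_closure (by simp)) e
    · -- inductive step: Euclidean reduction
      obtain ⟨n, hn⟩ := near_div a (3 * c) (by omega)
      set a' := a - n * (3 * c) with ha'_def
      have ha'1 : (3 : ℤ) ∣ 1 - a' := by
        have : n * (3 * c) = 3 * (n * c) := by ring
        rw [ha'_def, this]
        omega
      have ha'0 : a' ≠ 0 := by intro h; rw [h] at ha'1; omega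
      obtain ⟨m, hm⟩ := near_div c a' ha'0
      set B := Tprime ^ m * (Tcubed ^ (-n) * A) with hB_def
      have hBcoe : (B : Matrix (Fin 2) (Fin 2) ℤ) =
          !![a', b - 3 * n * d; c - m * a', d - m * (b - 3 * n * d)] := by
        rw [hB_def, SL_coe_mul, SL_coe_mul, Tprime_zpow,
          Tcubed_zpow, hAeta, Matrix.mul_fin_two, Matrix.mul_fin_two]
        ext i j
        fin_cases i <;> fin_cases j <;> simp [ha'_def] <;> ring
      have hBmem : B ∈ GammaFlat :=
        mul_mem (zpow_mem Tprime_mem_GammaFlat m)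
          (mul_mem (zpow_mem Tcubed_mem_GammaFlat (-n)) ⟨hb, ha, hd⟩)
      have hlt : ((B : Matrix (Fin 2) (Fin 2) ℤ) 1 0).natAbs < k := by
        rw [hBcoe]
        show (c - m * a').natAbs < k
        have h1 : |3 * c| = 3 * |c| := by rw [abs_mul]; norm_num
        rw [h1] at hn
        simp only [Int.abs_eq_natAbs] at hn hm
        omega
      have hBclos : B ∈ Subgroup.closure {Tcubed, Tprime} :=
        ih _ hlt B hBmem rfl
      have hAeq : A = Tcubed ^ n * (Tprime ^ (-m) * B) := by
        rw [hB_def]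
        group
      rw [hAeq]
      refine mul_mem (zpow_mem (Subgroup.subset_closure (by simp)) n)
        (mul_mem (zpow_mem (Subgroup.subset_closure (by simp)) (-m)) hBclos)

/-- The subgroup of `SL(2,ℤ)` generated by `T³ = [[1,3],[0,1]]` and `T' = [[1,0],[-1,1]]`
is equal to the full congruence subgroup
`Γ♭(3) = { [[a,b],[c,d]] ∈ SL(2,ℤ) : b ≡ 0, a ≡ d ≡ 1 (mod 3) }`. -/
theorem winger_monodromy_eq_GammaFlat :
    Subgroup.closure {Tcubed, Tprime} = GammaFlat := by
  apply le_antisymm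
  · rw [Subgroup.closure_le]
    rintro x hx
    simp only [Set.mem_insert_iff, Set.mem_singleton_iff] at hx
    rcases hx with rfl | rfl
    · exact Tcubed_mem_GammaFlat
    · exact Tprime_mem_GammaFlat
  · intro A hA
    exact GammaFlat_le_closure_aux _ A hA rfl
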